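/- Let u, ε, h be positive reals, q₁, q₃ real with q₃ < 2k, τ ≥ 0, and k a positive natural number, with 1 ± (-1)^k·τ·2^{q₃-2k}·h^{2k-q₃} ≠ 0. Then the unique real γ solving u·ε·(2/h)^{q₁} + γ·((-1)^k·(2/h)^{2k} ± τ·(2/h)^{q₃}) = 0 is γ = (-1)^{1-k}·u·ε·2^{q₁-2k}·h^{2k-q₁} / (1 ± (-1)^k·τ·2^{q₃-2k}·h^{2k-q₃}). Moreover, as h → 0 this γ converges to 0 (for q₁ < 2k). -/

import Mathlib

open Real Filter Topology

lemma aux_rpow_split (h a b : ℝ) (hh : 0 < h) :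
    (2/h) ^ a = (2/h) ^ b * ((2:ℝ) ^ (a - b) * h ^ (b - a)) := by
  rw [Real.div_rpow (by norm_num) hh.le, Real.div_rpow (by norm_num) hh.le,
    div_eq_mul_inv, div_eq_mul_inv, ← Real.rpow_neg hh.le, ← Real.rpow_neg hh.le]
  have e2 : (2:ℝ)^b * 2^(a-b) = 2^a := by rw [← Real.rpow_add two_pos]; ring_nf
  have eh : h^(-b) * h^(b-a) = h^(-a) := by rw [← Real.rpow_add hh]; ring_nf
  rw [← e2, ← eh]; ring

lemma aux_tendsto_rpow (p : ℝ) (hp : 0 < p) :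
    Tendsto (fun h : ℝ => h ^ p) (𝓝[>] (0:ℝ)) (𝓝 0) := by
  have := (Real.continuousAt_rpow_const 0 p (Or.inr hp.le)).tendsto
  rw [Real.zero_rpow hp.ne'] at this
  exact this.mono_left nhdsWithin_le_nhds

/-- Hyperviscosity coefficient when the discrete hyperviscosity operator itself
has a spurious mode `±τ·k̂^{q₃}` (sign `s = ±1`): the unique real `γ` cancelling
the advection growth mode is
`γ = (-1)^{1-k}·u·ε·2^{q₁-2k}·h^{2k-q₁} / (1 + s·(-1)^k·τ·2^{q₃-2k}·h^{2k-q₃})`,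
and (for `q₁ < 2k`) this `γ` tends to `0` as `h → 0⁺`. -/
theorem hyperviscosity_gamma_spurious_hyp (u ε τ q₁ q₃ : ℝ) (k : ℕ) (s : ℝ)
    (hu : 0 < u) (hε : 0 < ε) (hτ : 0 ≤ τ) (hk : 0 < k)
    (hq₃ : q₃ < 2 * k) (hs : s = 1 ∨ s = -1) :
    (∀ h : ℝ, 0 < h →
      1 + s * (-1 : ℝ) ^ k * τ * (2 : ℝ) ^ (q₃ - 2 * k) * h ^ (2 * k - q₃) ≠ 0 →
      ∀ γ : ℝ,
        u * ε * (2 / h) ^ q₁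
            + γ * ((-1 : ℝ) ^ k * (2 / h) ^ ((2 * k : ℕ) : ℝ)
              + s * τ * (2 / h) ^ q₃) = 0 ↔
          γ = (-1 : ℝ) ^ (k + 1) * u * ε * (2 : ℝ) ^ (q₁ - 2 * k) * h ^ (2 * k - q₁) /
              (1 + s * (-1 : ℝ) ^ k * τ * (2 : ℝ) ^ (q₃ - 2 * k) * h ^ (2 * k - q₃))) ∧
    (q₁ < 2 * k →
      Tendsto (fun h : ℝ =>
          (-1 : ℝ) ^ (k + 1) * u * ε * (2 : ℝ) ^ (q₁ - 2 * k) * h ^ (2 * k - q₁) /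
            (1 + s * (-1 : ℝ) ^ k * τ * (2 : ℝ) ^ (q₃ - 2 * k) * h ^ (2 * k - q₃)))
        (𝓝[>] (0 : ℝ)) (𝓝 0)) := by
  constructor
  · intro h hh hD γ
    have hcast : ((2 * k : ℕ) : ℝ) = 2 * (k : ℝ) := by push_cast; ring
    have hq3 := aux_rpow_split h q₃ (2*(k:ℝ)) hh
    have hq1 := aux_rpow_split h q₁ (2*(k:ℝ)) hh
    rw [hcast, hq1, hq3, pow_succ]
    set m : ℝ := (-1:ℝ)^k with hm
    set X : ℝ := (2/h) ^ (2*(k:ℝ)) with hX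
    have hXpos : 0 < X := Real.rpow_pos_of_pos (by positivity) _
    have hm0 : m ≠ 0 := pow_ne_zero _ (by norm_num)
    have hsq : m * m = 1 := by rw [hm, ← pow_add, ← two_mul, pow_mul]; norm_num
    have key : u * ε * (X * ((2:ℝ) ^ (q₁ - 2*(k:ℝ)) * h ^ (2*(k:ℝ) - q₁)))
        + γ * (m * X + s * τ * (X * ((2:ℝ) ^ (q₃ - 2*(k:ℝ)) * h ^ (2*(k:ℝ) - q₃))))
        = m * X * (γ * (1 + s * m * τ * (2:ℝ) ^ (q₃ - 2*(k:ℝ)) * h ^ (2*(k:ℝ) - q₃))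
            - m * (-1) * u * ε * (2:ℝ) ^ (q₁ - 2*(k:ℝ)) * h ^ (2*(k:ℝ) - q₁)) := by
      linear_combination (-(u * ε * ((2:ℝ) ^ (q₁ - 2*(k:ℝ)) * h ^ (2*(k:ℝ) - q₁))
        + γ * s * τ * ((2:ℝ) ^ (q₃ - 2*(k:ℝ)) * h ^ (2*(k:ℝ) - q₃))) * X) * hsq
    rw [key]
    constructor
    · intro h0
      have h1 := (mul_eq_zero.mp h0).resolve_left (mul_ne_zero hm0 hXpos.ne')
      rw [eq_div_iff hD]
      linarith [h1]
    · intro h0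
      rw [h0, div_mul_cancel₀ _ hD]
      ring
  · intro hq1
    have hp1 : (0:ℝ) < 2 * k - q₁ := by linarith
    have hp3 : (0:ℝ) < 2 * k - q₃ := by linarith
    have hnum : Tendsto (fun h : ℝ =>
        (-1 : ℝ) ^ (k + 1) * u * ε * (2 : ℝ) ^ (q₁ - 2 * k) * h ^ (2 * k - q₁))
        (𝓝[>] (0:ℝ)) (𝓝 0) := by
      have c : Tendsto (fun _ : ℝ => (-1 : ℝ) ^ (k + 1) * u * ε * (2 : ℝ) ^ (q₁ - 2 * k))
          (𝓝[>] (0:ℝ)) (𝓝 ((-1 : ℝ) ^ (k + 1) * u * ε * (2 : ℝ) ^ (q₁ - 2 * k))) :=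
        tendsto_const_nhds
      simpa using c.mul (aux_tendsto_rpow _ hp1)
    have hden : Tendsto (fun h : ℝ =>
        1 + s * (-1 : ℝ) ^ k * τ * (2 : ℝ) ^ (q₃ - 2 * k) * h ^ (2 * k - q₃))
        (𝓝[>] (0:ℝ)) (𝓝 1) := by
      have c : Tendsto (fun _ : ℝ => s * (-1 : ℝ) ^ k * τ * (2 : ℝ) ^ (q₃ - 2 * k))
          (𝓝[>] (0:ℝ)) (𝓝 (s * (-1 : ℝ) ^ k * τ * (2 : ℝ) ^ (q₃ - 2 * k))) :=
        tendsto_const_nhds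
      have := (tendsto_const_nhds (x := (1:ℝ)) (f := 𝓝[>] (0:ℝ))).add
        (c.mul (aux_tendsto_rpow _ hp3))
      simpa using this
    simpa [Pi.div_def] using hnum.div hden one_ne_zero
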